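/- Then for every t ∈ (0,r) one has Q(t) ≤ ψ₁'(t)/ψ₁(t) and t·exp(∫₀^t (Q(s) − 1/s) ds) ≤ ψ₁(t); in particular, if ∫₀^∞ s·Λ(s) ds ≤ M, then t·exp(∫₀^t (Q(s) − 1/s) ds) ≤ t·e^{M} for all t ∈ (0,r). -/

import Mathlib

open Set Filter MeasureTheory Topology


theorem hasDerivAt_psi' {ψ₁ : ℝ → ℝ} (hψ₁ : ContDiffOn ℝ 2 ψ₁ (Ici 0)) :
    ∀ t : ℝ, 0 < t → HasDerivAt ψ₁ (derivWithin ψ₁ (Ici 0) t) t := by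
  intro t ht
  have h1 : DifferentiableAt ℝ ψ₁ t :=
    (hψ₁.differentiableOn (by norm_num) t ht.le).differentiableAt (Ici_mem_nhds ht)
  have := h1.hasDerivAt
  rwa [← derivWithin_of_mem_nhds (Ici_mem_nhds ht)] at this

theorem hasDerivAt_D {Λ ψ₁ : ℝ → ℝ} (hψ₁ : ContDiffOn ℝ 2 ψ₁ (Ici 0))
    (odeψ₁ : ∀ t ∈ Ici (0:ℝ), derivWithin (derivWithin ψ₁ (Ici 0)) (Ici 0) t = Λ t * ψ₁ t) :
    ∀ t : ℝ, 0 < t → HasDerivAt (derivWithin ψ₁ (Ici 0)) (Λ t * ψ₁ t) t := by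
  intro t ht
  have hD1 : ContDiffOn ℝ 1 (derivWithin ψ₁ (Ici 0)) (Ici 0) :=
    hψ₁.derivWithin (uniqueDiffOn_Ici 0) (by norm_num)
  have h1 : DifferentiableAt ℝ (derivWithin ψ₁ (Ici 0)) t :=
    (hD1.differentiableOn one_ne_zero t ht.le).differentiableAt (Ici_mem_nhds ht)
  have := h1.hasDerivAt
  rwa [← derivWithin_of_mem_nhds (Ici_mem_nhds ht), odeψ₁ t ht.le] at this

theorem psi_ge_of_nonneg {Λ ψ₁ : ℝ → ℝ} (hΛnn : ∀ t ∈ Ici (0:ℝ), 0 ≤ Λ t)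
    (hψ₁ : ContDiffOn ℝ 2 ψ₁ (Ici 0))
    (odeψ₁ : ∀ t ∈ Ici (0:ℝ), derivWithin (derivWithin ψ₁ (Ici 0)) (Ici 0) t = Λ t * ψ₁ t)
    (ψ₁0 : ψ₁ 0 = 0) (ψ₁'0 : derivWithin ψ₁ (Ici 0) 0 = 1)
    {b : ℝ} (hb : 0 ≤ b) (hpos : ∀ s ∈ Icc (0:ℝ) b, 0 ≤ ψ₁ s) :
    ∀ s ∈ Icc (0:ℝ) b, s ≤ ψ₁ s := by
  have hD1 : ContDiffOn ℝ 1 (derivWithin ψ₁ (Ici 0)) (Ici 0) :=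
    hψ₁.derivWithin (uniqueDiffOn_Ici 0) (by norm_num)
  have hDc : ContinuousOn (derivWithin ψ₁ (Ici 0)) (Ici 0) := hD1.continuousOn
  have hDmono : MonotoneOn (derivWithin ψ₁ (Ici 0)) (Icc 0 b) := by
    apply monotoneOn_of_deriv_nonneg (convex_Icc _ _) (hDc.mono Icc_subset_Ici_self)
    · intro s hs
      rw [interior_Icc] at hs
      exact (hasDerivAt_D hψ₁ odeψ₁ s hs.1).differentiableAt.differentiableWithinAt
    · intro s hs
      rw [interior_Icc] at hs
      rw [(hasDerivAt_D hψ₁ odeψ₁ s hs.1).deriv]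
      exact mul_nonneg (hΛnn s hs.1.le) (hpos s ⟨hs.1.le, hs.2.le⟩)
  have hD1 : ∀ s ∈ Icc (0:ℝ) b, 1 ≤ derivWithin ψ₁ (Ici 0) s := by
    intro s hs
    have := hDmono (left_mem_Icc.2 hb) hs hs.1
    rwa [ψ₁'0] at this
  have hmono : MonotoneOn (fun s => ψ₁ s - s) (Icc 0 b) := by
    apply monotoneOn_of_deriv_nonneg (convex_Icc _ _)
      ((hψ₁.continuousOn.mono Icc_subset_Ici_self).sub continuousOn_id)
    · intro s hs
      rw [interior_Icc] at hs
      exact ((hasDerivAt_psi' hψ₁ s hs.1).sub (hasDerivAt_id s)).differentiableAt.differentiableWithinAt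
    · intro s hs
      rw [interior_Icc] at hs
      rw [((hasDerivAt_psi' hψ₁ s hs.1).sub (hasDerivAt_id s)).deriv]
      have := hD1 s ⟨hs.1.le, hs.2.le⟩
      linarith
  intro s hs
  have := hmono (left_mem_Icc.2 hb) hs hs.1
  simp only [ψ₁0, sub_zero] at this
  linarith [this]

theorem psi_ge {Λ ψ₁ : ℝ → ℝ} (hΛnn : ∀ t ∈ Ici (0:ℝ), 0 ≤ Λ t)
    (hψ₁ : ContDiffOn ℝ 2 ψ₁ (Ici 0))
    (odeψ₁ : ∀ t ∈ Ici (0:ℝ), derivWithin (derivWithin ψ₁ (Ici 0)) (Ici 0) t = Λ t * ψ₁ t)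
    (ψ₁0 : ψ₁ 0 = 0) (ψ₁'0 : derivWithin ψ₁ (Ici 0) 0 = 1) :
    ∀ t : ℝ, 0 ≤ t → t ≤ ψ₁ t := by
  by_contra hcon
  push_neg at hcon
  obtain ⟨t1, ht1, ht1'⟩ := hcon
  set S : Set ℝ := {t | 0 ≤ t ∧ ψ₁ t < t} with hS
  have hSne : S.Nonempty := ⟨t1, ht1, ht1'⟩
  have hSbdd : BddBelow S := ⟨0, fun x hx => hx.1⟩
  set u := sInf S with hu
  have hu0 : 0 ≤ u := le_csInf hSne fun x hx => hx.1
  have hlow : ∀ s, 0 ≤ s → s < u → s ≤ ψ₁ s := by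
    intro s hs hsu
    by_contra h
    push_neg at h
    exact absurd (csInf_le hSbdd ⟨hs, h⟩) (not_le.2 hsu)
  have hψu : u ≤ ψ₁ u := by
    rcases eq_or_lt_of_le hu0 with h | h
    · rw [← h, ψ₁0]
    · have hc : Tendsto (fun s => ψ₁ s - s) (𝓝[<] u) (𝓝 (ψ₁ u - u)) := by
        have : ContinuousAt (fun s => ψ₁ s - s) u :=
          ((hψ₁.continuousOn.continuousAt (Ici_mem_nhds h)).sub continuousAt_id)
        exact this.continuousWithinAt.tendsto
      have hev : ∀ᶠ s in 𝓝[<] u, 0 ≤ ψ₁ s - s := by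
        filter_upwards [Ioo_mem_nhdsLT_of_mem (⟨h, le_rfl⟩ : u ∈ Ioc 0 u)] with s hs
        linarith [hlow s hs.1.le hs.2]
      linarith [ge_of_tendsto hc hev]
  have hposu : ∀ s ∈ Icc (0:ℝ) u, 0 ≤ ψ₁ s := by
    intro s hs
    rcases lt_or_eq_of_le hs.2 with h | h
    · linarith [hlow s hs.1 h, hs.1]
    · rw [h]; linarith
  have hδ : ∃ δ > 0, ∀ s ∈ Icc (0:ℝ) (u + δ), 0 ≤ ψ₁ s := by
    rcases eq_or_lt_of_le hu0 with h | h
    · -- u = 0 : use D > 0 near 0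
      have hD1 : ContDiffOn ℝ 1 (derivWithin ψ₁ (Ici 0)) (Ici 0) :=
        hψ₁.derivWithin (uniqueDiffOn_Ici 0) (by norm_num)
      have hDc : ContinuousWithinAt (derivWithin ψ₁ (Ici 0)) (Ici 0) 0 :=
        hD1.continuousOn 0 Set.self_mem_Ici
      have h1 : Tendsto (derivWithin ψ₁ (Ici 0)) (𝓝[Ici 0] 0) (𝓝 1) := by
        have := hDc.tendsto; rwa [ψ₁'0] at this
      have hev : ∀ᶠ s in 𝓝[Ici 0] (0:ℝ), 0 < derivWithin ψ₁ (Ici 0) s :=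
        h1.eventually (eventually_gt_nhds one_pos)
      rw [eventually_nhdsWithin_iff, Metric.eventually_nhds_iff] at hev
      obtain ⟨δ, hδ0, hδ⟩ := hev
      refine ⟨δ/2, by positivity, fun s hs => ?_⟩
      rw [← h] at hs
      simp only [zero_add] at hs
      have hmono : MonotoneOn ψ₁ (Icc 0 (δ/2)) := by
        apply monotoneOn_of_deriv_nonneg (convex_Icc _ _)
          (hψ₁.continuousOn.mono Icc_subset_Ici_self)
        · intro x hx
          rw [interior_Icc] at hx
          exact (hasDerivAt_psi' hψ₁ x hx.1).differentiableAt.differentiableWithinAt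
        · intro x hx
          rw [interior_Icc] at hx
          rw [(hasDerivAt_psi' hψ₁ x hx.1).deriv]
          have : dist x 0 < δ := by
            rw [Real.dist_eq, sub_zero, abs_of_pos hx.1]
            linarith [hx.2]
          exact (hδ this (mem_Ici.2 hx.1.le)).le
      have := hmono (left_mem_Icc.2 (by positivity)) hs hs.1
      rwa [ψ₁0] at this
    · -- u > 0 : ψ₁ u ≥ u > 0, continuity
      have hcont : ContinuousAt ψ₁ u := hψ₁.continuousOn.continuousAt (Ici_mem_nhds h)
      have hev : ∀ᶠ s in 𝓝 u, 0 < ψ₁ s :=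
        hcont.eventually (eventually_gt_nhds (by linarith))
      rw [Metric.eventually_nhds_iff] at hev
      obtain ⟨δ, hδ0, hδ⟩ := hev
      refine ⟨δ/2, by positivity, fun s hs => ?_⟩
      rcases le_or_gt s u with h' | h'
      · exact hposu s ⟨hs.1, h'⟩
      · refine (hδ ?_).le
        rw [Real.dist_eq, abs_of_pos (by linarith)]
        linarith [hs.2]
  obtain ⟨δ, hδ0, hδpos⟩ := hδ
  have hge := psi_ge_of_nonneg hΛnn hψ₁ odeψ₁ ψ₁0 ψ₁'0 (by linarith : (0:ℝ) ≤ u + δ) hδpos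
  obtain ⟨s, hsS, hsu⟩ := exists_lt_of_csInf_lt hSne (by linarith : u < u + δ)
  exact absurd (hge s ⟨hsS.1, hsu.le⟩) (not_le.2 hsS.2)

theorem N_nonneg {Λ ψ₁ : ℝ → ℝ} (hΛnn : ∀ t ∈ Ici (0:ℝ), 0 ≤ Λ t)
    (hψ₁ : ContDiffOn ℝ 2 ψ₁ (Ici 0))
    (odeψ₁ : ∀ t ∈ Ici (0:ℝ), derivWithin (derivWithin ψ₁ (Ici 0)) (Ici 0) t = Λ t * ψ₁ t)
    (ψ₁0 : ψ₁ 0 = 0) (ψ₁'0 : derivWithin ψ₁ (Ici 0) 0 = 1) :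
    ∀ s : ℝ, 0 ≤ s → 0 ≤ s * derivWithin ψ₁ (Ici 0) s - ψ₁ s := by
  have hD1 : ContDiffOn ℝ 1 (derivWithin ψ₁ (Ici 0)) (Ici 0) :=
    hψ₁.derivWithin (uniqueDiffOn_Ici 0) (by norm_num)
  have hN' : ∀ s : ℝ, 0 < s →
      HasDerivAt (fun s => s * derivWithin ψ₁ (Ici 0) s - ψ₁ s) (s * (Λ s * ψ₁ s)) s := by
    intro s hs
    have h := ((hasDerivAt_id s).mul (hasDerivAt_D hψ₁ odeψ₁ s hs)).sub
      (hasDerivAt_psi' hψ₁ s hs)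
    refine h.congr_deriv ?_
    simp [id]
  have hcont : ContinuousOn (fun s => s * derivWithin ψ₁ (Ici 0) s - ψ₁ s) (Ici 0) :=
    (continuousOn_id.mul hD1.continuousOn).sub hψ₁.continuousOn
  have hmono : MonotoneOn (fun s => s * derivWithin ψ₁ (Ici 0) s - ψ₁ s) (Ici 0) := by
    apply monotoneOn_of_deriv_nonneg (convex_Ici 0) hcont
    · intro s hs
      rw [interior_Ici] at hs
      exact (hN' s hs).differentiableAt.differentiableWithinAt

    · intro s hs
      rw [interior_Ici] at hs
      have hs0 : 0 < s := hs
      rw [(hN' s hs0).deriv]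
      have h0 := psi_ge hΛnn hψ₁ odeψ₁ ψ₁0 ψ₁'0 s hs0.le
      exact mul_nonneg hs0.le (mul_nonneg (hΛnn s hs0.le) (by linarith))
  intro s hs
  have := hmono self_mem_Ici hs hs
  simpa [ψ₁0] using this

theorem ratio_tendsto {ψ₁ : ℝ → ℝ} (hψ₁ : ContDiffOn ℝ 2 ψ₁ (Ici 0))
    (ψ₁0 : ψ₁ 0 = 0) (ψ₁'0 : derivWithin ψ₁ (Ici 0) 0 = 1) :
    Tendsto (fun s => ψ₁ s / s) (𝓝[>] 0) (𝓝 1) := by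
  have hd : HasDerivWithinAt ψ₁ 1 (Ici 0) 0 := by
    have := ((hψ₁.differentiableOn (by norm_num)) 0 self_mem_Ici).hasDerivWithinAt
    rwa [ψ₁'0] at this
  rw [hasDerivWithinAt_iff_tendsto_slope] at hd
  rw [Ici_sdiff_left] at hd
  refine hd.congr fun s => ?_
  rw [slope_def_field, ψ₁0, sub_zero, sub_zero]

theorem F_deriv {Λ : ℝ → ℝ} (hΛc : ContinuousOn Λ (Ici 0)) :
    ∀ s : ℝ, 0 < s →
      HasDerivAt (fun s => ∫ u in (0:ℝ)..s, u^2 * Λ u) (s^2 * Λ s) s := by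
  intro s hs
  have hci : ContinuousOn (fun u => u^2 * Λ u) (Ici 0) :=
    ((continuous_pow 2).continuousOn).mul hΛc
  apply intervalIntegral.integral_hasDerivAt_right
  · apply ContinuousOn.intervalIntegrable
    apply hci.mono
    rw [uIcc_of_le hs.le]
    exact Icc_subset_Ici_self
  · exact ContinuousOn.stronglyMeasurableAtFilter isOpen_Ioi
      (hci.mono Ioi_subset_Ici_self) s hs
  · exact hci.continuousAt (Ici_mem_nhds hs)

theorem F_nonneg {Λ : ℝ → ℝ} (hΛnn : ∀ t ∈ Ici (0:ℝ), 0 ≤ Λ t) :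
    ∀ s : ℝ, 0 ≤ s → 0 ≤ ∫ u in (0:ℝ)..s, u^2 * Λ u := by
  intro s hs
  exact intervalIntegral.integral_nonneg hs
    fun u hu => mul_nonneg (sq_nonneg u) (hΛnn u hu.1)

theorem F_bound {Λ : ℝ → ℝ} (hΛc : ContinuousOn Λ (Ici 0))
    (hΛnn : ∀ t ∈ Ici (0:ℝ), 0 ≤ Λ t) :
    ∃ K : ℝ, 0 ≤ K ∧ ∀ s ∈ Ioc (0:ℝ) 1, (∫ u in (0:ℝ)..s, u^2 * Λ u) ≤ K * s^2 := by
  obtain ⟨K, hK⟩ := isCompact_Icc.exists_bound_of_continuousOn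
    (hΛc.mono (Icc_subset_Ici_self : Icc (0:ℝ) 1 ⊆ Ici 0))
  have hK0 : 0 ≤ K := le_trans (norm_nonneg _) (hK 0 ⟨le_rfl, zero_le_one⟩)
  refine ⟨K, hK0, fun s hs => ?_⟩
  have h1 : (∫ u in (0:ℝ)..s, u^2 * Λ u) ≤ ∫ u in (0:ℝ)..s, K * u := by
    apply intervalIntegral.integral_mono_on hs.1.le
    · apply ContinuousOn.intervalIntegrable
      apply (((continuous_pow 2).continuousOn).mul hΛc).mono
      rw [uIcc_of_le hs.1.le]
      exact Icc_subset_Ici_self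
    · exact (continuous_const.mul continuous_id).intervalIntegrable _ _
    · intro u hu
      have hu1 : u ≤ 1 := hu.2.trans hs.2
      have hΛu : Λ u ≤ K := le_trans (le_abs_self _) (hK u ⟨hu.1, hu1⟩)
      have hΛu0 : 0 ≤ Λ u := hΛnn u hu.1
      have e1 : u^2 * Λ u ≤ u^2 * K := mul_le_mul_of_nonneg_left hΛu (sq_nonneg u)
      have e2 : u^2 ≤ u := by nlinarith [hu.1]
      have e3 : u^2 * K ≤ u * K := mul_le_mul_of_nonneg_right e2 hK0
      linarith
  have h2 : (∫ u in (0:ℝ)..s, K * u) = K * (s^2/2) := by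
    rw [intervalIntegral.integral_const_mul, integral_id]
    ring
  rw [h2] at h1
  nlinarith [sq_nonneg s]

theorem F_tendsto {Λ : ℝ → ℝ} (hΛc : ContinuousOn Λ (Ici 0))
    (hΛnn : ∀ t ∈ Ici (0:ℝ), 0 ≤ Λ t) :
    Tendsto (fun s => ∫ u in (0:ℝ)..s, u^2 * Λ u) (𝓝[>] 0) (𝓝 0) := by
  obtain ⟨K, hK0, hK⟩ := F_bound hΛc hΛnn
  apply squeeze_zero'
  · filter_upwards [Ioc_mem_nhdsGT_of_mem (⟨le_rfl, zero_lt_one⟩ : (0:ℝ) ∈ Ico 0 1)]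
      with s hs
    exact F_nonneg hΛnn s hs.1.le
  · filter_upwards [Ioc_mem_nhdsGT_of_mem (⟨le_rfl, zero_lt_one⟩ : (0:ℝ) ∈ Ico 0 1)]
      with s hs
    exact hK s hs
  · have h : Continuous (fun s : ℝ => K * s ^ 2) := by continuity
    have h2 := h.tendsto 0
    norm_num at h2
    exact h2.mono_left nhdsWithin_le_nhds

theorem W_bound {Λ ψ₁ : ℝ → ℝ} (hΛc : ContinuousOn Λ (Ici 0))
    (hΛnn : ∀ t ∈ Ici (0:ℝ), 0 ≤ Λ t)
    (hψ₁ : ContDiffOn ℝ 2 ψ₁ (Ici 0))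
    (odeψ₁ : ∀ t ∈ Ici (0:ℝ), derivWithin (derivWithin ψ₁ (Ici 0)) (Ici 0) t = Λ t * ψ₁ t)
    (ψ₁0 : ψ₁ 0 = 0) (ψ₁'0 : derivWithin ψ₁ (Ici 0) 0 = 1) :
    ∀ s : ℝ, 0 < s → s * derivWithin ψ₁ (Ici 0) s - ψ₁ s ≤
      ψ₁ s / s * (∫ u in (0:ℝ)..s, u^2 * Λ u) := by
  have hD1 : ContDiffOn ℝ 1 (derivWithin ψ₁ (Ici 0)) (Ici 0) :=
    hψ₁.derivWithin (uniqueDiffOn_Ici 0) (by norm_num)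
  have hRd : ∀ s : ℝ, 0 < s → HasDerivAt
      (fun s => ψ₁ s / s * (∫ u in (0:ℝ)..s, u^2 * Λ u) -
        (s * derivWithin ψ₁ (Ici 0) s - ψ₁ s))
      ((s * derivWithin ψ₁ (Ici 0) s - ψ₁ s) / s^2 * (∫ u in (0:ℝ)..s, u^2 * Λ u)) s := by
    intro s hs
    have h1 : HasDerivAt (fun s => ψ₁ s / s)
        ((derivWithin ψ₁ (Ici 0) s * s - ψ₁ s * 1) / s^2) s :=
      (hasDerivAt_psi' hψ₁ s hs).div (hasDerivAt_id s) hs.ne'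
    have h2 := h1.mul (F_deriv hΛc s hs)
    have h3 := ((hasDerivAt_id s).mul (hasDerivAt_D hψ₁ odeψ₁ s hs)).sub
      (hasDerivAt_psi' hψ₁ s hs)
    have h4 := h2.sub h3
    refine h4.congr_deriv ?_
    have hs' : s ≠ 0 := hs.ne'
    simp only [id]
    field_simp
    ring
  have hRmono : MonotoneOn
      (fun s => ψ₁ s / s * (∫ u in (0:ℝ)..s, u^2 * Λ u) -
        (s * derivWithin ψ₁ (Ici 0) s - ψ₁ s)) (Ioi 0) := by
    apply monotoneOn_of_deriv_nonneg (convex_Ioi 0)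
    · intro s hs
      exact (hRd s hs).differentiableAt.continuousAt.continuousWithinAt
    · intro s hs
      rw [interior_Ioi] at hs
      exact (hRd s hs).differentiableAt.differentiableWithinAt
    · intro s hs
      rw [interior_Ioi] at hs
      have hs0 : 0 < s := hs
      rw [(hRd s hs0).deriv]
      apply mul_nonneg
      · apply div_nonneg _ (sq_nonneg s)
        exact N_nonneg hΛnn hψ₁ odeψ₁ ψ₁0 ψ₁'0 s hs0.le
      · exact F_nonneg hΛnn s hs0.le
  have hN0 : Tendsto (fun s => s * derivWithin ψ₁ (Ici 0) s - ψ₁ s) (𝓝[>] 0) (𝓝 0) := by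
    have hNc : ContinuousWithinAt (fun s => s * derivWithin ψ₁ (Ici 0) s - ψ₁ s) (Ici 0) 0 :=
      ((continuousOn_id.mul hD1.continuousOn).sub hψ₁.continuousOn) 0 self_mem_Ici
    have := hNc.tendsto.mono_left (nhdsWithin_mono 0 Ioi_subset_Ici_self)
    simpa [ψ₁0] using this
  have hRt : Tendsto
      (fun s => ψ₁ s / s * (∫ u in (0:ℝ)..s, u^2 * Λ u) -
        (s * derivWithin ψ₁ (Ici 0) s - ψ₁ s)) (𝓝[>] 0) (𝓝 0) := by
    have := ((ratio_tendsto hψ₁ ψ₁0 ψ₁'0).mul (F_tendsto hΛc hΛnn)).sub hN0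
    simpa using this
  intro s hs
  have h0 : (0:ℝ) ≤ ψ₁ s / s * (∫ u in (0:ℝ)..s, u^2 * Λ u) -
      (s * derivWithin ψ₁ (Ici 0) s - ψ₁ s) := by
    apply le_of_tendsto hRt
    filter_upwards [Ioo_mem_nhdsGT_of_mem (⟨le_rfl, hs⟩ : (0:ℝ) ∈ Ico 0 s)] with x hx
    exact hRmono (mem_Ioi.2 hx.1) (mem_Ioi.2 hs) hx.2.le
  linarith

theorem riccati_le {Λ Q ψ₁ : ℝ → ℝ}
    (hΛnn : ∀ t ∈ Ici (0:ℝ), 0 ≤ Λ t)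
    {r : ℝ} (hr : 0 < r)
    (hQ1 : ContDiffOn ℝ 1 Q (Ioo 0 r))
    (hric : ∀ t ∈ Ioo (0:ℝ) r, deriv Q t + Q t ^ 2 ≤ Λ t)
    {c ε : ℝ} (hc : 0 < c) (hε : ε ∈ Ioo (0:ℝ) r)
    (hQasym : ∀ t ∈ Ioo (0:ℝ) ε, |Q t - 1 / t| ≤ c)
    (hψ₁ : ContDiffOn ℝ 2 ψ₁ (Ici 0))
    (odeψ₁ : ∀ t ∈ Ici (0:ℝ), derivWithin (derivWithin ψ₁ (Ici 0)) (Ici 0) t = Λ t * ψ₁ t)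
    (ψ₁0 : ψ₁ 0 = 0) (ψ₁'0 : derivWithin ψ₁ (Ici 0) 0 = 1) :
    ∀ t ∈ Ioo (0:ℝ) r, Q t * ψ₁ t ≤ derivWithin ψ₁ (Ici 0) t := by
  have hD1 : ContDiffOn ℝ 1 (derivWithin ψ₁ (Ici 0)) (Ici 0) :=
    hψ₁.derivWithin (uniqueDiffOn_Ici 0) (by norm_num)
  have hψge := psi_ge hΛnn hψ₁ odeψ₁ ψ₁0 ψ₁'0
  have hQc : ContinuousOn Q (Ioo 0 r) := hQ1.continuousOn
  set t₀ : ℝ := ε / 2 with ht₀def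
  have ht₀pos : 0 < t₀ := by simp [ht₀def]; linarith [hε.1]
  have ht₀ε : t₀ < ε := by simp [ht₀def]; linarith [hε.1]
  have ht₀mem : t₀ ∈ Ioo (0:ℝ) r := ⟨ht₀pos, lt_trans ht₀ε hε.2⟩
  have hIoo : OrdConnected (Ioo (0:ℝ) r) := ordConnected_Ioo
  -- FTC for the primitive of Q
  have hIdQ : ∀ s ∈ Ioo (0:ℝ) r,
      HasDerivAt (fun s => ∫ u in t₀..s, Q u) (Q s) s := by
    intro s hs
    apply intervalIntegral.integral_hasDerivAt_right
    · exact (hQc.mono (hIoo.uIcc_subset ht₀mem hs)).intervalIntegrable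
    · exact ContinuousOn.stronglyMeasurableAtFilter isOpen_Ioo hQc s hs
    · exact hQc.continuousAt (isOpen_Ioo.mem_nhds hs)
  have hQd : ∀ s ∈ Ioo (0:ℝ) r, HasDerivAt Q (deriv Q s) s := fun s hs =>
    ((hQ1.differentiableOn one_ne_zero s hs).differentiableAt (isOpen_Ioo.mem_nhds hs)).hasDerivAt
  -- the comparison function g
  set g : ℝ → ℝ := fun s => (derivWithin ψ₁ (Ici 0) s - Q s * ψ₁ s) *
    Real.exp (∫ u in t₀..s, Q u) with hgdef
  have hg : ∀ s ∈ Ioo (0:ℝ) r, HasDerivAt g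
      ((Λ s - (deriv Q s + Q s ^ 2)) * ψ₁ s * Real.exp (∫ u in t₀..s, Q u)) s := by
    intro s hs
    have p1 : HasDerivAt (fun s => derivWithin ψ₁ (Ici 0) s - Q s * ψ₁ s)
        (Λ s * ψ₁ s - (deriv Q s * ψ₁ s + Q s * derivWithin ψ₁ (Ici 0) s)) s :=
      (hasDerivAt_D hψ₁ odeψ₁ s hs.1).sub ((hQd s hs).mul (hasDerivAt_psi' hψ₁ s hs.1))
    have p2 : HasDerivAt (fun s => Real.exp (∫ u in t₀..s, Q u))
        (Real.exp (∫ u in t₀..s, Q u) * Q s) s := (hIdQ s hs).exp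
    have h := p1.mul p2
    refine h.congr_deriv ?_
    ring
  have hgmono : MonotoneOn g (Ioo 0 r) := by
    apply monotoneOn_of_deriv_nonneg (convex_Ioo 0 r)
    · exact fun s hs => (hg s hs).differentiableAt.continuousAt.continuousWithinAt
    · intro s hs
      rw [interior_Ioo] at hs
      exact (hg s hs).differentiableAt.differentiableWithinAt
    · intro s hs
      rw [interior_Ioo] at hs
      rw [(hg s hs).deriv]
      apply mul_nonneg (mul_nonneg _ _) (Real.exp_pos _).le
      · linarith [hric s hs]
      · linarith [hψge s hs.1.le, hs.1]
  -- bound for D on [0, ε]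
  obtain ⟨B1, hB1⟩ := isCompact_Icc.exists_bound_of_continuousOn
    (hD1.continuousOn.mono (Icc_subset_Ici_self : Icc (0:ℝ) ε ⊆ Ici 0))
  have hB1nn : 0 ≤ B1 := le_trans (norm_nonneg _) (hB1 0 ⟨le_rfl, hε.1.le⟩)
  have hψle : ∀ s ∈ Icc (0:ℝ) ε, ψ₁ s ≤ B1 * s := by
    have hmono : MonotoneOn (fun s => B1 * s - ψ₁ s) (Icc 0 ε) := by
      apply monotoneOn_of_deriv_nonneg (convex_Icc 0 ε)
        ((continuousOn_const.mul continuousOn_id).sub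
          (hψ₁.continuousOn.mono Icc_subset_Ici_self))
      · intro s hs
        rw [interior_Icc] at hs
        exact (((hasDerivAt_id s).const_mul B1).sub
          (hasDerivAt_psi' hψ₁ s hs.1)).differentiableAt.differentiableWithinAt
      · intro s hs
        rw [interior_Icc] at hs
        rw [HasDerivAt.deriv (f := (fun x => B1) * id - ψ₁) (((hasDerivAt_id s).const_mul B1).sub (hasDerivAt_psi' hψ₁ s hs.1))]
        have := hB1 s ⟨hs.1.le, hs.2.le⟩
        rw [Real.norm_eq_abs] at this
        have := le_abs_self (derivWithin ψ₁ (Ici 0) s)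
        have h2 := abs_le.1 (hB1 s ⟨hs.1.le, hs.2.le⟩)
        linarith [h2.2]
    intro s hs
    have := hmono (left_mem_Icc.2 hε.1.le) hs hs.1
    simp only [mul_zero, ψ₁0, sub_zero] at this
    linarith
  -- bound on |g| near zero
  have hgb : ∀ s ∈ Ioo (0:ℝ) t₀, |g s| ≤
      (B1 + (c * (B1 * ε) + B1)) * (Real.exp (c * t₀) / t₀) * s := by
    intro s hs
    have hsε : s ∈ Ioo (0:ℝ) ε := ⟨hs.1, lt_trans hs.2 ht₀ε⟩
    have hψs0 : 0 ≤ ψ₁ s := le_trans hs.1.le (hψge s hs.1.le)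
    have hψsB : ψ₁ s ≤ B1 * s := hψle s ⟨hs.1.le, hsε.2.le⟩
    -- bound the first factor
    have hfac : |derivWithin ψ₁ (Ici 0) s - Q s * ψ₁ s| ≤ B1 + (c * (B1 * ε) + B1) := by
      have hD : |derivWithin ψ₁ (Ici 0) s| ≤ B1 := by
        have := hB1 s ⟨hs.1.le, hsε.2.le⟩
        rwa [Real.norm_eq_abs] at this
      have hsplit : Q s * ψ₁ s = (Q s - 1/s) * ψ₁ s + ψ₁ s / s := by
        ring
      have h1 : |(Q s - 1/s) * ψ₁ s| ≤ c * (B1 * ε) := by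
        rw [abs_mul, abs_of_nonneg hψs0]
        apply mul_le_mul (hQasym s hsε) _ hψs0 hc.le
        have : B1 * s ≤ B1 * ε := mul_le_mul_of_nonneg_left hsε.2.le hB1nn
        linarith
      have h2 : |ψ₁ s / s| ≤ B1 := by
        rw [abs_of_nonneg (div_nonneg hψs0 hs.1.le)]
        rw [div_le_iff₀ hs.1]
        calc ψ₁ s ≤ B1 * s := hψsB
        _ = B1 * s := rfl
      calc |derivWithin ψ₁ (Ici 0) s - Q s * ψ₁ s|
          = |derivWithin ψ₁ (Ici 0) s - ((Q s - 1/s) * ψ₁ s + ψ₁ s / s)| := by rw [hsplit]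
        _ ≤ |derivWithin ψ₁ (Ici 0) s| + |(Q s - 1/s) * ψ₁ s + ψ₁ s / s| := abs_sub _ _
        _ ≤ |derivWithin ψ₁ (Ici 0) s| + (|(Q s - 1/s) * ψ₁ s| + |ψ₁ s / s|) := by
            linarith [abs_add_le ((Q s - 1/s) * ψ₁ s) (ψ₁ s / s)]
        _ ≤ B1 + (c * (B1 * ε) + B1) := by linarith
    -- bound the exponential factor
    have hexp : Real.exp (∫ u in t₀..s, Q u) ≤ Real.exp (c * t₀) / t₀ * s := by
      have hint : ∫ u in s..t₀, (1/u - c) ≤ ∫ u in s..t₀, Q u := by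
        apply intervalIntegral.integral_mono_on hs.2.le
        · apply ContinuousOn.intervalIntegrable
          apply ContinuousOn.sub _ continuousOn_const
          apply ContinuousOn.div continuousOn_const continuousOn_id
          intro x hx
          rw [uIcc_of_le hs.2.le] at hx
          exact ne_of_gt (lt_of_lt_of_le hs.1 hx.1)
        · exact (hQc.mono (hIoo.uIcc_subset
            ⟨hs.1, lt_trans hs.2 (lt_trans ht₀ε hε.2)⟩ ht₀mem)).intervalIntegrable
        · intro u hu
          have huε : u ∈ Ioo (0:ℝ) ε :=
            ⟨lt_of_lt_of_le hs.1 hu.1, lt_of_le_of_lt hu.2 ht₀ε⟩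
          have := abs_le.1 (hQasym u huε)
          linarith [this.1]
      have hval : ∫ u in s..t₀, (1/u - c) = Real.log (t₀/s) - c * (t₀ - s) := by
        rw [intervalIntegral.integral_sub, integral_one_div, intervalIntegral.integral_const]
        · simp only [smul_eq_mul]
          ring
        · rw [uIcc_of_le hs.2.le]
          intro h
          exact absurd (mem_Icc.1 h).1 (not_le.2 hs.1)
        · apply ContinuousOn.intervalIntegrable
          apply ContinuousOn.div continuousOn_const continuousOn_id
          intro x hx
          rw [uIcc_of_le hs.2.le] at hx
          exact ne_of_gt (lt_of_lt_of_le hs.1 hx.1)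
        · exact intervalIntegrable_const
      have hsym : (∫ u in t₀..s, Q u) = -∫ u in s..t₀, Q u :=
        (intervalIntegral.integral_symm s t₀)
      have hlog : Real.log (t₀/s) = Real.log t₀ - Real.log s :=
        Real.log_div ht₀pos.ne' hs.1.ne'
      have hIle : (∫ u in t₀..s, Q u) ≤ Real.log s - Real.log t₀ + c * t₀ := by
        rw [hsym]
        have : Real.log (t₀/s) - c * (t₀ - s) ≤ ∫ u in s..t₀, Q u := hval ▸ hint
        rw [hlog] at this
        nlinarith [hs.1, hc]
      calc Real.exp (∫ u in t₀..s, Q u) ≤ Real.exp (Real.log s - Real.log t₀ + c * t₀) :=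
            Real.exp_le_exp.2 hIle
        _ = s * (Real.exp (c * t₀) / t₀) := by
            rw [Real.exp_add, Real.exp_sub, Real.exp_log hs.1, Real.exp_log ht₀pos]
            ring
        _ = Real.exp (c * t₀) / t₀ * s := by ring
    calc |g s| = |derivWithin ψ₁ (Ici 0) s - Q s * ψ₁ s| *
          Real.exp (∫ u in t₀..s, Q u) := by
          rw [hgdef]
          rw [abs_mul, abs_of_pos (Real.exp_pos _)]
      _ ≤ (B1 + (c * (B1 * ε) + B1)) * (Real.exp (c * t₀) / t₀ * s) := by
          apply mul_le_mul hfac hexp (Real.exp_pos _).le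
          have := abs_nonneg (derivWithin ψ₁ (Ici 0) s - Q s * ψ₁ s)
          linarith
      _ = (B1 + (c * (B1 * ε) + B1)) * (Real.exp (c * t₀) / t₀) * s := by ring
  -- g tends to 0 at 0⁺
  have hgt : Tendsto g (𝓝[>] 0) (𝓝 0) := by
    have hb : Tendsto (fun s : ℝ =>
        (B1 + (c * (B1 * ε) + B1)) * (Real.exp (c * t₀) / t₀) * s) (𝓝[>] 0) (𝓝 0) := by
      have h : Continuous (fun s : ℝ =>
        (B1 + (c * (B1 * ε) + B1)) * (Real.exp (c * t₀) / t₀) * s) := by continuity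
      have h2 := h.tendsto 0
      norm_num at h2
      exact h2.mono_left nhdsWithin_le_nhds
    apply squeeze_zero_norm' _ hb
    filter_upwards [Ioo_mem_nhdsGT_of_mem (⟨le_rfl, ht₀pos⟩ : (0:ℝ) ∈ Ico 0 t₀)] with s hs
    rw [Real.norm_eq_abs]
    exact hgb s hs
  -- conclude
  intro t ht
  have h0 : 0 ≤ g t := by
    apply le_of_tendsto hgt
    filter_upwards [Ioo_mem_nhdsGT_of_mem (⟨le_rfl, ht.1⟩ : (0:ℝ) ∈ Ico 0 t)] with x hx
    exact hgmono ⟨hx.1, lt_trans hx.2 ht.2⟩ ht hx.2.le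
  rw [hgdef] at h0
  simp only at h0
  have hexp : 0 < Real.exp (∫ u in t₀..t, Q u) := Real.exp_pos _
  have h1 := (mul_nonneg_iff_of_pos_right hexp).mp h0
  linarith

/-- If `Q` satisfies the Riccati inequality `Q' + Q² ≤ Λ` on `(0,r)` with
`Q(t) = 1/t + O(1)` as `t → 0⁺`, then `Q ≤ ψ₁'/ψ₁` and
`t exp(∫₀^t (Q(s) - 1/s) ds) ≤ ψ₁(t)` on `(0,r)`; in particular if
`∫₀^∞ s Λ(s) ds ≤ M` then `t exp(∫₀^t (Q(s) - 1/s) ds) ≤ t e^M` on `(0,r)`. -/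
theorem stmt_18 (Λ Q ψ₁ : ℝ → ℝ)
    (hΛc : ContinuousOn Λ (Ici 0)) (hΛnn : ∀ t ∈ Ici (0 : ℝ), 0 ≤ Λ t)
    (hsΛint : IntegrableOn (fun s => s * Λ s) (Ioi 0))
    (r : ℝ) (hr : 0 < r)
    (hQ1 : ContDiffOn ℝ 1 Q (Ioo 0 r))
    (hric : ∀ t ∈ Ioo (0 : ℝ) r, deriv Q t + Q t ^ 2 ≤ Λ t)
    (c ε : ℝ) (hc : 0 < c) (hε : ε ∈ Ioo (0 : ℝ) r)
    (hQasym : ∀ t ∈ Ioo (0 : ℝ) ε, |Q t - 1 / t| ≤ c)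
    (hψ₁ : ContDiffOn ℝ 2 ψ₁ (Ici 0))
    (odeψ₁ : ∀ t ∈ Ici (0 : ℝ),
      derivWithin (derivWithin ψ₁ (Ici 0)) (Ici 0) t = Λ t * ψ₁ t)
    (ψ₁0 : ψ₁ 0 = 0) (ψ₁'0 : derivWithin ψ₁ (Ici 0) 0 = 1) :
    (∀ t ∈ Ioo (0 : ℝ) r,
      Q t ≤ derivWithin ψ₁ (Ici 0) t / ψ₁ t ∧
      t * Real.exp (∫ s in (0 : ℝ)..t, (Q s - 1 / s)) ≤ ψ₁ t) ∧
    (∀ M : ℝ, (∫ s in Ioi (0 : ℝ), s * Λ s) ≤ M →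
      ∀ t ∈ Ioo (0 : ℝ) r,
        t * Real.exp (∫ s in (0 : ℝ)..t, (Q s - 1 / s)) ≤ t * Real.exp M) := by
  have hψge := psi_ge hΛnn hψ₁ odeψ₁ ψ₁0 ψ₁'0
  have hψpos : ∀ t : ℝ, 0 < t → 0 < ψ₁ t := fun t ht => lt_of_lt_of_le ht (hψge t ht.le)
  have hD1 : ContDiffOn ℝ 1 (derivWithin ψ₁ (Ici 0)) (Ici 0) :=
    hψ₁.derivWithin (uniqueDiffOn_Ici 0) (by norm_num)
  have hQc : ContinuousOn Q (Ioo 0 r) := hQ1.continuousOn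
  have hQW := riccati_le hΛnn hr hQ1 hric hc hε hQasym hψ₁ odeψ₁ ψ₁0 ψ₁'0
  have hQdiv : ∀ t ∈ Ioo (0:ℝ) r, Q t ≤ derivWithin ψ₁ (Ici 0) t / ψ₁ t := by
    intro t ht
    rw [le_div_iff₀ (hψpos t ht.1)]
    exact hQW t ht
  -- integrability of Q - 1/s on (0, δ] for δ < ε, δ < r
  have hint0 : ∀ δ : ℝ, 0 < δ → δ < ε →
      IntervalIntegrable (fun s => Q s - 1/s) volume 0 δ := by
    intro δ hδ0 hδε
    rw [intervalIntegrable_iff_integrableOn_Ioc_of_le hδ0.le]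
    have hsub : Ioc (0:ℝ) δ ⊆ Ioo 0 r := fun x hx =>
      ⟨hx.1, lt_trans (lt_of_le_of_lt hx.2 hδε) hε.2⟩
    have hcont : ContinuousOn (fun s => Q s - 1/s) (Ioc 0 δ) := by
      apply ContinuousOn.sub (hQc.mono hsub)
      exact ContinuousOn.div continuousOn_const continuousOn_id fun x hx => ne_of_gt hx.1
    have hmeas : AEStronglyMeasurable (fun s => Q s - 1/s) (volume.restrict (Ioc 0 δ)) :=
      hcont.aestronglyMeasurable measurableSet_Ioc
    apply Integrable.mono' (integrable_const c) hmeas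
    rw [ae_restrict_iff' measurableSet_Ioc]
    apply ae_of_all
    intro s hs
    rw [Real.norm_eq_abs]
    exact hQasym s ⟨hs.1, lt_of_le_of_lt hs.2 hδε⟩
  have hintmid : ∀ δ t : ℝ, 0 < δ → δ ≤ t → t < r →
      IntervalIntegrable (fun s => Q s - 1/s) volume δ t := by
    intro δ t hδ0 hδt htr
    apply ContinuousOn.intervalIntegrable
    rw [uIcc_of_le hδt]
    have hsub : Icc δ t ⊆ Ioo 0 r := fun x hx => ⟨lt_of_lt_of_le hδ0 hx.1, lt_of_le_of_lt hx.2 htr⟩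
    apply ContinuousOn.sub (hQc.mono hsub)
    exact ContinuousOn.div continuousOn_const continuousOn_id
      fun x hx => ne_of_gt (lt_of_lt_of_le hδ0 hx.1)
  -- the two key bounds for fixed δ
  have hkey : ∀ t ∈ Ioo (0:ℝ) r, ∀ δ : ℝ, 0 < δ → δ < ε → δ < t →
      (∫ s in (0:ℝ)..t, (Q s - 1/s)) ≤ c * δ +
        ((Real.log (ψ₁ t) - Real.log t) - (Real.log (ψ₁ δ) - Real.log δ)) ∧
      (∫ s in (δ:ℝ)..t, (derivWithin ψ₁ (Ici 0) s / ψ₁ s - 1/s)) =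
        (Real.log (ψ₁ t) - Real.log t) - (Real.log (ψ₁ δ) - Real.log δ) := by
    intro t ht δ hδ0 hδε hδt
    have h0δ := hint0 δ hδ0 hδε
    have hδtI := hintmid δ t hδ0 hδt.le ht.2
    have hWcont : ContinuousOn (fun s => derivWithin ψ₁ (Ici 0) s / ψ₁ s - 1/s) (Icc δ t) := by
      have hsub : Icc δ t ⊆ Ioi (0:ℝ) := fun x hx => lt_of_lt_of_le hδ0 hx.1
      apply ContinuousOn.sub
      · apply ContinuousOn.div
        · exact hD1.continuousOn.mono fun x hx => mem_Ici.2 (le_of_lt (hsub hx))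
        · exact hψ₁.continuousOn.mono fun x hx => mem_Ici.2 (le_of_lt (hsub hx))
        · exact fun x hx => ne_of_gt (hψpos x (hsub hx))
      · exact ContinuousOn.div continuousOn_const continuousOn_id
          fun x hx => ne_of_gt (hsub hx)
    have hWint : IntervalIntegrable (fun s => derivWithin ψ₁ (Ici 0) s / ψ₁ s - 1/s)
        volume δ t := by
      apply ContinuousOn.intervalIntegrable
      rwa [uIcc_of_le hδt.le]
    -- value of the middle integral of W - 1/s
    have hWval : (∫ s in (δ:ℝ)..t, (derivWithin ψ₁ (Ici 0) s / ψ₁ s - 1/s)) =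
        (Real.log (ψ₁ t) - Real.log t) - (Real.log (ψ₁ δ) - Real.log δ) := by
      have := intervalIntegral.integral_eq_sub_of_hasDerivAt
        (f := fun s => Real.log (ψ₁ s) - Real.log s)
        (f' := fun s => derivWithin ψ₁ (Ici 0) s / ψ₁ s - 1/s)
        (a := δ) (b := t) ?_ hWint
      · rw [this]
      · intro s hs
        rw [uIcc_of_le hδt.le] at hs
        have hs0 : 0 < s := lt_of_lt_of_le hδ0 hs.1
        have h1 := (hasDerivAt_psi' hψ₁ s hs0).log (ne_of_gt (hψpos s hs0))
        have h2 := Real.hasDerivAt_log (ne_of_gt hs0)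
        have := h1.sub h2
        exact this.congr_deriv (by simp only [one_div])
    constructor
    · -- split the integral
      have hsplit : (∫ s in (0:ℝ)..t, (Q s - 1/s)) =
          (∫ s in (0:ℝ)..δ, (Q s - 1/s)) + ∫ s in (δ:ℝ)..t, (Q s - 1/s) :=
        (intervalIntegral.integral_add_adjacent_intervals h0δ hδtI).symm
      have hb1 : (∫ s in (0:ℝ)..δ, (Q s - 1/s)) ≤ c * δ := by
        have := intervalIntegral.norm_integral_le_of_norm_le_const
          (a := 0) (b := δ) (C := c) (f := fun s => Q s - 1/s) ?_
        · rw [Real.norm_eq_abs] at this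
          have h2 := le_of_abs_le this
          rwa [sub_zero, abs_of_pos hδ0] at h2
        · intro x hx
          rw [uIoc_of_le hδ0.le] at hx
          rw [Real.norm_eq_abs]
          exact hQasym x ⟨hx.1, lt_of_le_of_lt hx.2 hδε⟩
      have hb2 : (∫ s in (δ:ℝ)..t, (Q s - 1/s)) ≤
          ∫ s in (δ:ℝ)..t, (derivWithin ψ₁ (Ici 0) s / ψ₁ s - 1/s) := by
        apply intervalIntegral.integral_mono_on hδt.le hδtI hWint
        intro s hs
        have hsm : s ∈ Ioo (0:ℝ) r := ⟨lt_of_lt_of_le hδ0 hs.1, lt_of_le_of_lt hs.2 ht.2⟩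
        have := hQdiv s hsm
        linarith
      rw [hsplit]
      rw [hWval] at hb2
      linarith
    · exact hWval

  have hFcont : ∀ s : ℝ, 0 < s → ContinuousAt (fun s => ∫ u in (0:ℝ)..s, u^2*Λ u) s :=
    fun s hs => (F_deriv hΛc s hs).continuousAt
  have hkey2 : ∀ t ∈ Ioo (0:ℝ) r, ∀ δ : ℝ, 0 < δ → δ < ε → δ < t →
      (∫ s in (δ:ℝ)..t, (derivWithin ψ₁ (Ici 0) s / ψ₁ s - 1/s)) ≤
        (∫ u in (0:ℝ)..δ, u^2*Λ u) / δ + ∫ s in Ioi (0:ℝ), s * Λ s := by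
    intro t ht δ hδ0 hδε hδt
    have hsub : Icc δ t ⊆ Ioi (0:ℝ) := fun x hx => lt_of_lt_of_le hδ0 hx.1
    have hWcont : ContinuousOn (fun s => derivWithin ψ₁ (Ici 0) s / ψ₁ s - 1/s) (Icc δ t) := by
      apply ContinuousOn.sub
      · apply ContinuousOn.div
        · exact hD1.continuousOn.mono fun x hx => mem_Ici.2 (le_of_lt (hsub hx))
        · exact hψ₁.continuousOn.mono fun x hx => mem_Ici.2 (le_of_lt (hsub hx))
        · exact fun x hx => ne_of_gt (hψpos x (hsub hx))
      · exact ContinuousOn.div continuousOn_const continuousOn_id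
          fun x hx => ne_of_gt (hsub hx)
    have hWint : IntervalIntegrable (fun s => derivWithin ψ₁ (Ici 0) s / ψ₁ s - 1/s)
        volume δ t := by
      apply ContinuousOn.intervalIntegrable
      rwa [uIcc_of_le hδt.le]
    have hFcontOn : ContinuousOn (fun s => ∫ u in (0:ℝ)..s, u^2*Λ u) (Icc δ t) :=
      fun s hs => (hFcont s (hsub hs)).continuousWithinAt
    have hcont1 : ContinuousOn (fun s => (∫ u in (0:ℝ)..s, u^2*Λ u) / s^2) (Icc δ t) :=
      hFcontOn.div ((continuous_pow 2).continuousOn)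
        fun x hx => pow_ne_zero _ (ne_of_gt (hsub hx))
    have hcont2 : ContinuousOn (fun s => s * Λ s) (Icc δ t) :=
      continuousOn_id.mul (hΛc.mono fun x hx => mem_Ici.2 (hsub hx).le)
    have hint1 : IntervalIntegrable (fun s => (∫ u in (0:ℝ)..s, u^2*Λ u) / s^2) volume δ t := by
      apply ContinuousOn.intervalIntegrable
      rwa [uIcc_of_le hδt.le]
    have hint2 : IntervalIntegrable (fun s => s * Λ s) volume δ t := by
      apply ContinuousOn.intervalIntegrable
      rwa [uIcc_of_le hδt.le]
    have hmono1 : (∫ s in (δ:ℝ)..t, (derivWithin ψ₁ (Ici 0) s / ψ₁ s - 1/s)) ≤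
        ∫ s in (δ:ℝ)..t, (∫ u in (0:ℝ)..s, u^2*Λ u) / s^2 := by
      apply intervalIntegral.integral_mono_on hδt.le hWint hint1
      intro s hs
      have hs0 : 0 < s := hsub hs
      have hψp := hψpos s hs0
      have hWb := W_bound hΛc hΛnn hψ₁ odeψ₁ ψ₁0 ψ₁'0 s hs0
      rw [show derivWithin ψ₁ (Ici 0) s / ψ₁ s - 1/s
            = (s * derivWithin ψ₁ (Ici 0) s - ψ₁ s) / (s * ψ₁ s) by field_simp,
          show (∫ u in (0:ℝ)..s, u^2*Λ u) / s^2
            = (ψ₁ s / s * (∫ u in (0:ℝ)..s, u^2*Λ u)) / (s * ψ₁ s) by field_simp]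
      exact (div_le_div_iff_of_pos_right (mul_pos hs0 hψp)).2 hWb
    have hHd : ∀ s ∈ uIcc δ t, HasDerivAt (fun s => -((∫ u in (0:ℝ)..s, u^2*Λ u) / s))
        ((∫ u in (0:ℝ)..s, u^2*Λ u) / s^2 - s * Λ s) s := by
      intro s hs
      rw [uIcc_of_le hδt.le] at hs
      have hs0 : 0 < s := hsub hs
      have h1 := ((F_deriv hΛc s hs0).div (hasDerivAt_id s) (ne_of_gt hs0)).neg
      refine h1.congr_deriv ?_
      simp only [id]
      field_simp
      ring
    have hint3 : IntervalIntegrable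
        (fun s => (∫ u in (0:ℝ)..s, u^2*Λ u) / s^2 - s * Λ s) volume δ t := hint1.sub hint2
    have hFTC := intervalIntegral.integral_eq_sub_of_hasDerivAt hHd hint3
    have hsum : (∫ s in (δ:ℝ)..t, ((∫ u in (0:ℝ)..s, u^2*Λ u) / s^2 - s * Λ s))
        = (∫ s in (δ:ℝ)..t, (∫ u in (0:ℝ)..s, u^2*Λ u) / s^2)
          - ∫ s in (δ:ℝ)..t, s * Λ s :=
      intervalIntegral.integral_sub hint1 hint2
    have htail : (∫ s in (δ:ℝ)..t, s * Λ s) ≤ ∫ s in Ioi (0:ℝ), s * Λ s := by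
      rw [intervalIntegral.integral_of_le hδt.le]
      apply setIntegral_mono_set hsΛint
      · rw [EventuallyLE, ae_restrict_iff' measurableSet_Ioi]
        exact ae_of_all _ fun s hs => mul_nonneg (le_of_lt hs) (hΛnn s (mem_Ici.2 (le_of_lt hs)))
      · exact HasSubset.Subset.eventuallyLE fun x hx => lt_trans hδ0 hx.1
    have hFt : 0 ≤ (∫ u in (0:ℝ)..t, u^2*Λ u) / t :=
      div_nonneg (F_nonneg hΛnn t (lt_trans hδ0 hδt).le) (lt_trans hδ0 hδt).le
    rw [hsum] at hFTC
    linarith [hmono1, htail, hFt, hFTC]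
  -- limit facts
  have hlog0 : Tendsto (fun δ => Real.log (ψ₁ δ) - Real.log δ) (𝓝[>] (0:ℝ)) (𝓝 0) := by
    have h1 := (Real.continuousAt_log one_ne_zero).tendsto.comp (ratio_tendsto hψ₁ ψ₁0 ψ₁'0)
    rw [Real.log_one] at h1
    apply h1.congr'
    filter_upwards [self_mem_nhdsWithin] with δ hδ
    have hδ0 : (0:ℝ) < δ := hδ
    exact Real.log_div (ne_of_gt (hψpos δ hδ0)) (ne_of_gt hδ0)
  have hFq : Tendsto (fun δ => (∫ u in (0:ℝ)..δ, u^2*Λ u) / δ) (𝓝[>] (0:ℝ)) (𝓝 0) := by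
    obtain ⟨K, hK0, hK⟩ := F_bound hΛc hΛnn
    apply squeeze_zero'
    · filter_upwards [self_mem_nhdsWithin] with δ hδ
      have hδ0 : (0:ℝ) < δ := hδ
      exact div_nonneg (F_nonneg hΛnn δ hδ0.le) hδ0.le
    · filter_upwards [Ioc_mem_nhdsGT_of_mem (⟨le_rfl, zero_lt_one⟩ : (0:ℝ) ∈ Ico 0 1)]
        with δ hδ
      have h1 := hK δ hδ
      rw [div_le_iff₀ hδ.1]
      calc (∫ u in (0:ℝ)..δ, u^2*Λ u) ≤ K * δ^2 := h1
        _ = K * δ * δ := by ring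
    · have h : Continuous (fun δ : ℝ => K * δ) := continuous_const.mul continuous_id
      have h2 := h.tendsto 0
      norm_num at h2
      exact h2.mono_left nhdsWithin_le_nhds
  have hcδ : Tendsto (fun δ : ℝ => c * δ) (𝓝[>] (0:ℝ)) (𝓝 0) := by
    have h : Continuous (fun δ : ℝ => c * δ) := continuous_const.mul continuous_id
    have h2 := h.tendsto 0
    norm_num at h2
    exact h2.mono_left nhdsWithin_le_nhds
  constructor
  · intro t ht
    refine ⟨hQdiv t ht, ?_⟩
    have hXle : (∫ s in (0:ℝ)..t, (Q s - 1/s)) ≤ Real.log (ψ₁ t) - Real.log t := by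
      have hev : ∀ᶠ δ in 𝓝[>] (0:ℝ), (∫ s in (0:ℝ)..t, (Q s - 1/s)) ≤
          c * δ + ((Real.log (ψ₁ t) - Real.log t) - (Real.log (ψ₁ δ) - Real.log δ)) := by
        filter_upwards [Ioo_mem_nhdsGT_of_mem
          (⟨le_rfl, lt_min hε.1 ht.1⟩ : (0:ℝ) ∈ Ico 0 (min ε t))] with δ hδ
        exact (hkey t ht δ hδ.1 (lt_of_lt_of_le hδ.2 (min_le_left _ _))
          (lt_of_lt_of_le hδ.2 (min_le_right _ _))).1
      have hlim : Tendsto (fun δ => c * δ +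
          ((Real.log (ψ₁ t) - Real.log t) - (Real.log (ψ₁ δ) - Real.log δ)))
          (𝓝[>] (0:ℝ)) (𝓝 (Real.log (ψ₁ t) - Real.log t)) := by
        have := hcδ.add ((tendsto_const_nhds (x := Real.log (ψ₁ t) - Real.log t)).sub hlog0)
        simpa using this
      exact ge_of_tendsto hlim hev
    calc t * Real.exp (∫ s in (0:ℝ)..t, (Q s - 1/s))
        ≤ t * Real.exp (Real.log (ψ₁ t) - Real.log t) :=
          mul_le_mul_of_nonneg_left (Real.exp_le_exp.2 hXle) ht.1.le
      _ = ψ₁ t := by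
          rw [Real.exp_sub, Real.exp_log (hψpos t ht.1), Real.exp_log ht.1]
          field_simp [ht.1.ne']
  · intro M hM t ht
    have hXle : (∫ s in (0:ℝ)..t, (Q s - 1/s)) ≤ M := by
      have hev : ∀ᶠ δ in 𝓝[>] (0:ℝ), (∫ s in (0:ℝ)..t, (Q s - 1/s)) ≤
          c * δ + ((∫ u in (0:ℝ)..δ, u^2*Λ u) / δ + M) := by
        filter_upwards [Ioo_mem_nhdsGT_of_mem
          (⟨le_rfl, lt_min hε.1 ht.1⟩ : (0:ℝ) ∈ Ico 0 (min ε t))] with δ hδ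
        have hδε : δ < ε := lt_of_lt_of_le hδ.2 (min_le_left _ _)
        have hδt : δ < t := lt_of_lt_of_le hδ.2 (min_le_right _ _)
        obtain ⟨h1, h2⟩ := hkey t ht δ hδ.1 hδε hδt
        have h3 := hkey2 t ht δ hδ.1 hδε hδt
        rw [h2] at h3
        linarith
      have hlim : Tendsto (fun δ => c * δ + ((∫ u in (0:ℝ)..δ, u^2*Λ u) / δ + M))
          (𝓝[>] (0:ℝ)) (𝓝 M) := by
        have := hcδ.add (hFq.add (tendsto_const_nhds (x := M)))
        simpa using this
      exact ge_of_tendsto hlim hev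
    exact mul_le_mul_of_nonneg_left (Real.exp_le_exp.2 hXle) ht.1.le
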